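/- Let p ≥ 11 be a prime with p ≡ 1 (mod 4). The energy of the Paley graph G_p equals (p−1)(1+√p)/2; in particular E(G_p) > p^{3/2}/2. -/

import Mathlib

/-- The adjacency matrix of a simple graph over `ℝ` is Hermitian. -/
theorem SimpleGraph.adjMatrix_isHermitian {V : Type*} [Fintype V] (G : SimpleGraph V)
    [DecidableRel G.Adj] : (G.adjMatrix ℝ).IsHermitian := by
  rw [Matrix.IsHermitian, Matrix.conjTranspose_eq_transpose_of_trivial]
  exact SimpleGraph.isSymm_adjMatrix G

/-- The eigenvalues of the (real, symmetric) adjacency matrix of a simple graph,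
indexed by the vertex set (listed with multiplicity). -/
noncomputable def SimpleGraph.adjEigenvalues {V : Type*} [Fintype V] [DecidableEq V]
    (G : SimpleGraph V) : V → ℝ :=
  letI := Classical.decRel G.Adj
  (G.adjMatrix_isHermitian).eigenvalues

/-- The energy of a simple graph: the sum of the absolute values of the
eigenvalues of its adjacency matrix. -/
noncomputable def SimpleGraph.energy {V : Type*} [Fintype V] [DecidableEq V]
    (G : SimpleGraph V) : ℝ :=
  ∑ v, |G.adjEigenvalues v|

/-- The Paley graph of order `p` (for a prime `p ≡ 1 (mod 4)`): the vertices are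
the elements of `GF(p) = ZMod p`, and two distinct vertices are adjacent iff their
difference is a (nonzero) square in `GF(p)`. -/
def paleyGraph (p : ℕ) [Fact p.Prime] (hp : p % 4 = 1) : SimpleGraph (ZMod p) where
  Adj x y := x ≠ y ∧ IsSquare (x - y)
  symm := ⟨by
    rintro x y ⟨hne, hsq⟩
    refine ⟨hne.symm, ?_⟩
    have h1 : IsSquare (-1 : ZMod p) := ZMod.exists_sq_eq_neg_one_iff.2 (by omega)
    simpa [neg_one_mul, neg_sub] using h1.mul hsq⟩
  loopless := ⟨fun x h => h.1 rfl⟩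

instance paleyGraph.instDecidableRelAdj (p : ℕ) [Fact p.Prime] {hp : p % 4 = 1} :
    DecidableRel (paleyGraph p hp).Adj := fun x y =>
      show Decidable (x ≠ y ∧ IsSquare (x - y)) from instDecidableAnd

/-! ### Auxiliary lemmas -/

open Finset Matrix

section SpectralAux

lemma sum_eig_trace {n : Type*} [Fintype n] [DecidableEq n]
    {A : Matrix n n ℝ} (hA : A.IsHermitian) : ∑ i, hA.eigenvalues i = A.trace := by
  nth_rewrite 2 [hA.spectral_theorem]
  rw [Unitary.conjStarAlgAut_apply, Matrix.trace_mul_cycle, Unitary.coe_star_mul_self, Matrix.one_mul, Matrix.trace_diagonal]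
  simp

lemma sum_eig_sq_trace {n : Type*} [Fintype n] [DecidableEq n]
    {A : Matrix n n ℝ} (hA : A.IsHermitian) : ∑ i, (hA.eigenvalues i)^2 = (A * A).trace := by
  set U := (hA.eigenvectorUnitary : Matrix n n ℝ) with hU
  set D := Matrix.diagonal (RCLike.ofReal ∘ hA.eigenvalues : n → ℝ) with hD
  have hsUU : star U * U = 1 := Unitary.coe_star_mul_self _
  have hsU : star U * (U * (D * star U)) = D * star U := by
    rw [← Matrix.mul_assoc, hsUU, Matrix.one_mul]
  have key : A * A = U * (D * (D * star U)) := by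
    conv_lhs => rw [hA.spectral_theorem]
    simp only [Unitary.conjStarAlgAut_apply, Matrix.mul_assoc, hsU]
    exact congrArg (U * ·) (congrArg (D * ·) hsU)
  rw [key, ← Matrix.mul_assoc, ← Matrix.mul_assoc, Matrix.trace_mul_cycle]
  rw [← Matrix.mul_assoc, hsUU, Matrix.one_mul, Matrix.diagonal_mul_diagonal,
    Matrix.trace_diagonal]
  simp [sq]

end SpectralAux

section CharAux

lemma quadChar_mul_shift_sum {F : Type*} [Field F] [Fintype F] [DecidableEq F]
    (hF : ringChar F ≠ 2) {a : F} (ha : a ≠ 0) :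
    ∑ w : F, quadraticChar F w * quadraticChar F (w + a) = -1 := by
  classical
  have hterm : ∀ w ∈ univ.erase (0 : F),
      quadraticChar F w * quadraticChar F (w + a) = quadraticChar F (1 + a * w⁻¹) := by
    intro w hw
    have hw0 : w ≠ 0 := (Finset.mem_erase.mp hw).1
    have h : w + a = w * (1 + a * w⁻¹) := by field_simp
    rw [h, _root_.map_mul, ← mul_assoc, ← sq, quadraticChar_sq_one hw0, one_mul]
  have h0 : ∑ w ∈ univ.erase (0 : F), quadraticChar F (1 + a * w⁻¹)
      = ∑ u ∈ univ.erase (1 : F), quadraticChar F u := by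
    apply Finset.sum_nbij' (fun w => 1 + a * w⁻¹) (fun u => a * (u - 1)⁻¹)
    · intro w hw
      have hw0 : w ≠ 0 := (Finset.mem_erase.mp hw).1
      simp only [Finset.mem_erase, Finset.mem_univ, and_true]
      intro h
      have h' : a * w⁻¹ = 0 := by linear_combination h
      exact ha (by simpa [hw0] using h')
    · intro u hu
      have hu1 : u ≠ 1 := (Finset.mem_erase.mp hu).1
      simp only [Finset.mem_erase, Finset.mem_univ, and_true]
      exact mul_ne_zero ha (inv_ne_zero (sub_ne_zero.mpr hu1))
    · intro w hw
      have hw0 : w ≠ 0 := (Finset.mem_erase.mp hw).1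
      field_simp
      rw [add_sub_cancel_left, div_self ha]
    · intro u hu
      have hu1 : u ≠ 1 := (Finset.mem_erase.mp hu).1
      have h : u - 1 ≠ 0 := sub_ne_zero.mpr hu1
      field_simp
      ring
    · intros; rfl
  have h1 : ∑ w : F, quadraticChar F w * quadraticChar F (w + a)
      = ∑ w ∈ univ.erase (0 : F), quadraticChar F w * quadraticChar F (w + a) := by
    rw [Finset.sum_erase]
    simp
  have h2 : ∑ u ∈ univ.erase (1 : F), quadraticChar F u
      = (∑ u : F, quadraticChar F u) - quadraticChar F 1 := by
    rw [Finset.sum_erase_eq_sub (Finset.mem_univ _)]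
  rw [h1, Finset.sum_congr rfl hterm, h0, h2, quadraticChar_sum_zero hF]
  simp

/-- The real-valued quadratic character of `ZMod p`. -/
noncomputable def pchi (p : ℕ) [Fact p.Prime] : ZMod p → ℝ :=
  fun a => ((quadraticChar (ZMod p) a : ℤ) : ℝ)

variable (p : ℕ) [Fact p.Prime]

lemma p_odd : p % 4 = 1 → ringChar (ZMod p) ≠ 2 := by
  intro h
  rw [ZMod.ringChar_zmod_n]
  omega

lemma pchi_sum_zero (hp : p % 4 = 1) : ∑ a : ZMod p, pchi p a = 0 := by
  have h := quadraticChar_sum_zero (F := ZMod p) (p_odd p hp)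
  unfold pchi
  exact_mod_cast congrArg (Int.cast : ℤ → ℝ) h

lemma pchi_neg (hp : p % 4 = 1) (a : ZMod p) : pchi p (-a) = pchi p a := by
  have hsq : IsSquare (-1 : ZMod p) := ZMod.exists_sq_eq_neg_one_iff.2 (by omega)
  have hne : (-1 : ZMod p) ≠ 0 := by
    intro h
    have h1 : (1 : ZMod p) = 0 := by linear_combination -h
    exact one_ne_zero h1
  have h1 : quadraticChar (ZMod p) (-1) = 1 := (quadraticChar_one_iff_isSquare hne).mpr hsq
  have h2 : -a = -1 * a := by ring
  rw [pchi, pchi, h2, _root_.map_mul, h1, one_mul]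

lemma pchi_sum_shift (hp : p % 4 = 1) (x : ZMod p) :
    ∑ z : ZMod p, pchi p (x - z) = 0 :=
  (Fintype.sum_equiv (Equiv.subLeft x) _ (pchi p) fun _ => rfl).trans (pchi_sum_zero p hp)

lemma pchi_sum_shift' (hp : p % 4 = 1) (y : ZMod p) :
    ∑ z : ZMod p, pchi p (z - y) = 0 :=
  (Fintype.sum_equiv (Equiv.subRight y) _ (pchi p) fun _ => rfl).trans (pchi_sum_zero p hp)

lemma pchi_prod_sum (hp : p % 4 = 1) (x y : ZMod p) :
    ∑ z : ZMod p, pchi p (x - z) * pchi p (z - y)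
      = if x = y then (p : ℝ) - 1 else -1 := by
  have heq : ∀ z : ZMod p, pchi p (x - z) = pchi p (z - x) := by
    intro z
    rw [← pchi_neg p hp (z - x), neg_sub]
  simp only [heq]
  by_cases hxy : x = y
  · subst hxy
    rw [if_pos rfl]
    have h1 : ∀ z : ZMod p, pchi p (z - x) * pchi p (z - x)
        = if z = x then 0 else 1 := by
      intro z
      by_cases hz : z = x
      · simp [hz, pchi]
      · rw [if_neg hz, ← sq]
        have hne : z - x ≠ 0 := sub_ne_zero.mpr hz
        have h2 := quadraticChar_sq_one (F := ZMod p) hne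
        unfold pchi
        exact_mod_cast congrArg (Int.cast : ℤ → ℝ) h2
    rw [Finset.sum_congr rfl (fun z _ => h1 z), Finset.sum_ite, Finset.sum_const,
      Finset.sum_const, Finset.filter_eq', if_pos (Finset.mem_univ x), Finset.filter_ne',
      Finset.card_erase_of_mem (Finset.mem_univ x)]
    simp [Finset.card_univ, ZMod.card]
    rw [Nat.cast_sub (Nat.Prime.one_lt (Fact.out)).le]
    norm_num
  · rw [if_neg hxy]
    have ha : x - y ≠ 0 := sub_ne_zero.mpr hxy
    have key := quadChar_mul_shift_sum (F := ZMod p) (p_odd p hp) ha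
    have h3 : ∑ z : ZMod p, pchi p (z - x) * pchi p (z - y)
        = ∑ w : ZMod p, pchi p w * pchi p (w + (x - y)) := by
      apply Fintype.sum_equiv (Equiv.subRight x)
      intro z
      simp only [Equiv.subRight_apply]
      congr 2
      ring
    rw [h3]
    unfold pchi
    exact_mod_cast congrArg (Int.cast : ℤ → ℝ) key

end CharAux

section PaleyAux

variable (p : ℕ) [Fact p.Prime]

lemma paley_B_entry (hp : p % 4 = 1)
    [inst : DecidableRel (paleyGraph p hp).Adj] (x y : ZMod p) :
    ((paleyGraph p hp).adjMatrix ℝ + (paleyGraph p hp).adjMatrix ℝ + 1) x y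
      = 1 + pchi p (x - y) := by
  by_cases hxy : x = y
  · subst hxy
    simp [pchi, Matrix.one_apply]
  · have hne : x - y ≠ 0 := sub_ne_zero.mpr hxy
    by_cases hadj : (paleyGraph p hp).Adj x y
    · have hsq : IsSquare (x - y) := (hadj : x ≠ y ∧ IsSquare (x - y)).2
      have h : quadraticChar (ZMod p) (x - y) = 1 :=
        (quadraticChar_one_iff_isSquare hne).mpr hsq
      simp [pchi, Matrix.add_apply, Matrix.one_apply, hxy, hadj, h]
    · have hnsq : ¬ IsSquare (x - y) := fun h => hadj (And.intro hxy h)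
      have h : quadraticChar (ZMod p) (x - y) = -1 :=
        quadraticChar_neg_one_iff_not_isSquare.mpr hnsq
      simp [pchi, Matrix.add_apply, Matrix.one_apply, hxy, hadj, h]

lemma paley_BB (hp : p % 4 = 1) [inst : DecidableRel (paleyGraph p hp).Adj] :
    ((paleyGraph p hp).adjMatrix ℝ + (paleyGraph p hp).adjMatrix ℝ + 1) *
      ((paleyGraph p hp).adjMatrix ℝ + (paleyGraph p hp).adjMatrix ℝ + 1)
    = ((p:ℝ) - 1) • (Matrix.of fun _ _ => (1:ℝ)) + (p:ℝ) • 1 := by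
  ext x y
  rw [Matrix.mul_apply]
  simp only [paley_B_entry p hp]
  have expand : ∀ z : ZMod p, (1 + pchi p (x - z)) * (1 + pchi p (z - y))
      = 1 + pchi p (x - z) + pchi p (z - y) + pchi p (x - z) * pchi p (z - y) :=
    fun z => by ring
  rw [Finset.sum_congr rfl fun z _ => expand z, Finset.sum_add_distrib,
    Finset.sum_add_distrib, Finset.sum_add_distrib, pchi_sum_shift p hp x,
    pchi_sum_shift' p hp y, pchi_prod_sum p hp x y, Finset.sum_const, Finset.card_univ,
    ZMod.card]
  simp only [Matrix.add_apply, Matrix.smul_apply, Matrix.one_apply, Matrix.of_apply,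
    smul_eq_mul]
  by_cases hxy : x = y <;> simp [hxy] <;> ring

end PaleyAux

lemma energy_counting {V : Type*} [Fintype V] (pn : ℕ) (hp11 : 11 ≤ pn)
    (β : V → ℝ) (s : ℝ) (hs2 : s^2 = pn) (hs1 : 1 ≤ s) (hirr : Irrational s)
    (hcard : Fintype.card V = pn)
    (hsumb : ∑ v, β v = pn)
    (hsumb2 : ∑ v, (β v)^2 = 2*(pn:ℝ)^2 - pn)
    (hcases : ∀ v, β v = pn ∨ β v = -pn ∨ β v = s ∨ β v = -s) :
    ∑ v, |(β v - 1)/2| = ((pn:ℝ) - 1) * (1 + s) / 2 := by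
  classical
  have hpreal : (11:ℝ) ≤ (pn:ℝ) := by exact_mod_cast hp11
  have hs0 : (0:ℝ) ≤ s := by linarith
  set T1 := Finset.univ.filter (fun v : V => β v = pn) with hT1
  set R1 := Finset.univ.filter (fun v : V => ¬ β v = pn) with hR1
  set T2 := R1.filter (fun v : V => β v = -pn) with hT2
  set R2 := R1.filter (fun v : V => ¬ β v = -pn) with hR2
  set T3 := R2.filter (fun v : V => β v = s) with hT3
  set T4 := R2.filter (fun v : V => ¬ β v = s) with hT4
  have hmem4 : ∀ v ∈ T4, β v = -s := by
    intro v hv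
    rw [hT4, Finset.mem_filter] at hv
    have h2 := hv.1
    rw [hR2, Finset.mem_filter] at h2
    have h1 := h2.1
    rw [hR1, Finset.mem_filter] at h1
    rcases hcases v with h | h | h | h
    · exact absurd h h1.2
    · exact absurd h h2.2
    · exact absurd h hv.2
    · exact h
  have hsplit : ∀ g : ℝ → ℝ, ∑ v, g (β v) =
      T1.card * g pn + T2.card * g (-pn) + T3.card * g s + T4.card * g (-s) := by
    intro g
    have e0 := Finset.sum_filter_add_sum_filter_not Finset.univ
      (fun v : V => β v = pn) (fun v => g (β v))
    have e1 := Finset.sum_filter_add_sum_filter_not R1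
      (fun v : V => β v = -pn) (fun v => g (β v))
    have e2 := Finset.sum_filter_add_sum_filter_not R2
      (fun v : V => β v = s) (fun v => g (β v))
    have c1 : ∑ v ∈ T1, g (β v) = T1.card * g pn := by
      have hc : ∀ v ∈ T1, g (β v) = g pn := by
        intro v hv
        have hv' := hv
        rw [hT1, Finset.mem_filter] at hv'
        rw [hv'.2]
      rw [Finset.sum_congr rfl hc, Finset.sum_const, nsmul_eq_mul]
    have c2 : ∑ v ∈ T2, g (β v) = T2.card * g (-pn) := by
      have hc : ∀ v ∈ T2, g (β v) = g (-(pn:ℝ)) := by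
        intro v hv
        have hv' := hv
        rw [hT2, Finset.mem_filter] at hv'
        rw [hv'.2]
      rw [Finset.sum_congr rfl hc, Finset.sum_const, nsmul_eq_mul]
    have c3 : ∑ v ∈ T3, g (β v) = T3.card * g s := by
      have hc : ∀ v ∈ T3, g (β v) = g s := by
        intro v hv
        have hv' := hv
        rw [hT3, Finset.mem_filter] at hv'
        rw [hv'.2]
      rw [Finset.sum_congr rfl hc, Finset.sum_const, nsmul_eq_mul]
    have c4 : ∑ v ∈ T4, g (β v) = T4.card * g (-s) := by
      have hc : ∀ v ∈ T4, g (β v) = g (-s) := by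
        intro v hv
        rw [hmem4 v hv]
      rw [Finset.sum_congr rfl hc, Finset.sum_const, nsmul_eq_mul]
    calc ∑ v, g (β v) = ∑ v ∈ T1, g (β v) + ∑ v ∈ R1, g (β v) := e0.symm
      _ = ∑ v ∈ T1, g (β v) + (∑ v ∈ T2, g (β v) + ∑ v ∈ R2, g (β v)) := by rw [e1]
      _ = ∑ v ∈ T1, g (β v) + (∑ v ∈ T2, g (β v)
            + (∑ v ∈ T3, g (β v) + ∑ v ∈ T4, g (β v))) := by rw [e2]
      _ = _ := by rw [c1, c2, c3, c4]; ring
  set a := T1.card with hadef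
  set d := T2.card with hddef
  set b := T3.card with hbdef
  set c := T4.card with hcdef
  clear_value a b c d
  clear hadef hddef hbdef hcdef hT1 hT2 hT3 hT4 hR1 hR2 hmem4 hcases
  have eq1 : (a:ℝ) + d + b + c = pn := by
    have h := hsplit (fun _ => 1)
    simp only [mul_one] at h
    rw [Finset.sum_const, Finset.card_univ, hcard, nsmul_eq_mul, mul_one] at h
    linarith
  have eq2 : (a:ℝ) * pn + d * (-(pn:ℝ)) + b * s + c * (-s) = pn := by
    have h := hsplit id
    simp only [id] at h
    rw [hsumb] at h
    linarith
  have eq3 : (a:ℝ) * (pn:ℝ)^2 + d * (pn:ℝ)^2 + b * pn + c * pn = 2*(pn:ℝ)^2 - pn := by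
    have h := hsplit (fun x => x^2)
    simp only [neg_sq, hs2] at h
    rw [hsumb2] at h
    linarith
  have had : (a:ℝ) + d = 1 := by
    have key : ((a:ℝ) + d) * ((pn:ℝ)^2 - pn) = (pn:ℝ)^2 - pn := by
      linear_combination eq3 - (pn:ℝ) * eq1
    have hne : (pn:ℝ)^2 - pn ≠ 0 := by nlinarith
    exact mul_right_cancel₀ hne (key.trans (one_mul _).symm)
  have hadnat : a + d = 1 := by exact_mod_cast had
  have hsne : s ≠ 0 := by linarith
  rcases (by omega : (a = 1 ∧ d = 0) ∨ (a = 0 ∧ d = 1)) with ⟨ha, hd⟩ | ⟨ha, hd⟩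
  · -- main case
    have hbc : (b:ℝ) = c := by
      have h0 : ((b:ℝ) - c) * s = 0 := by
        rw [ha, hd] at eq2
        push_cast at eq2 ⊢
        linarith
      rcases mul_eq_zero.mp h0 with h | h
      · linarith
      · exact absurd h hsne
    have h2b : 2 * (b:ℝ) = (pn:ℝ) - 1 := by
      rw [ha, hd] at eq1
      push_cast at eq1
      linarith
    rw [hsplit (fun x => |(x - 1)/2|), ha, hd]
    have a1 : |((pn:ℝ) - 1)/2| = ((pn:ℝ) - 1)/2 := abs_of_nonneg (by linarith)
    have a2 : |((s:ℝ) - 1)/2| = (s - 1)/2 := abs_of_nonneg (by linarith)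
    have a3 : |((-s:ℝ) - 1)/2| = (s + 1)/2 := by
      rw [abs_of_nonpos (by linarith)]
      ring
    rw [a1, a2, a3]
    push_cast
    linear_combination (-(s+1)/2) * hbc + (s/2) * h2b
  · -- impossible case
    exfalso
    have hbc2 : ((b:ℝ) - c) * s = 2 * pn := by
      rw [ha, hd] at eq2
      push_cast at eq2 ⊢
      linarith
    by_cases hbc : b = c
    · rw [hbc] at hbc2
      simp at hbc2
      nlinarith
    · have hirr2 : Irrational (((b:ℤ) - c : ℤ) * s) := by
        apply Irrational.intCast_mul hirr
        intro h
        apply hbc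
        have h2 : (b:ℤ) = c := by linarith [sub_eq_zero.mp h]
        exact_mod_cast h2
      have heq : (((b:ℤ) - c : ℤ) : ℝ) * s = ((2 * pn : ℕ) : ℝ) := by
        push_cast
        linarith
      rw [heq] at hirr2
      exact Nat.not_irrational _ hirr2

lemma paley_energy_sum (p : ℕ) [Fact p.Prime] (hp11 : 11 ≤ p) (hp : p % 4 = 1)
    [inst : DecidableRel (paleyGraph p hp).Adj]
    (hA : ((paleyGraph p hp).adjMatrix ℝ).IsHermitian) :
    ∑ v, |hA.eigenvalues v| = ((p : ℝ) - 1) * (1 + Real.sqrt p) / 2 := by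
  classical
  set A := (paleyGraph p hp).adjMatrix ℝ with hAdef
  set μ := hA.eigenvalues with hμdef
  set s := Real.sqrt p with hsdef
  have hpreal : (11:ℝ) ≤ (p:ℝ) := by exact_mod_cast hp11
  have hppos : (0:ℝ) < p := by linarith
  have hs2 : s^2 = p := Real.sq_sqrt hppos.le
  have hs0 : 0 ≤ s := Real.sqrt_nonneg _
  have hs1 : 1 ≤ s := by
    rw [hsdef, show (1:ℝ) = Real.sqrt 1 by simp]
    exact Real.sqrt_le_sqrt (by linarith)
  set J : Matrix (ZMod p) (ZMod p) ℝ := Matrix.of (fun _ _ => 1) with hJdef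
  have hcard : Fintype.card (ZMod p) = p := ZMod.card p
  have hJJ : J * J = (p:ℝ) • J := by
    ext x y
    simp [hJdef, Matrix.mul_apply, Finset.sum_const, Finset.card_univ, hcard]
  set B := A + A + 1 with hBdef
  have hBB : B * B = ((p:ℝ) - 1) • J + (p:ℝ) • 1 := paley_BB p hp
  -- trace facts
  have htrA : A.trace = 0 := SimpleGraph.trace_adjMatrix _ _
  have hsum : ∑ v, μ v = 0 := (sum_eig_trace hA).trans htrA
  have htrJ : J.trace = p := by
    simp [Matrix.trace, Matrix.diag, hJdef, hcard]
  have htr1 : (1 : Matrix (ZMod p) (ZMod p) ℝ).trace = p := by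
    rw [Matrix.trace_one, hcard]
  have htrBB : (B * B).trace = 2*(p:ℝ)^2 - p := by
    rw [hBB, Matrix.trace_add, Matrix.trace_smul, Matrix.trace_smul, htrJ, htr1]
    simp only [smul_eq_mul]
    ring
  have hexp : B * B = A*A + A*A + A*A + A*A + A + A + A + A + 1 := by
    rw [hBdef]; noncomm_ring
  have htrAA : (A*A).trace = ((p:ℝ)^2 - p)/2 := by
    have h := htrBB
    rw [hexp] at h
    simp only [Matrix.trace_add] at h
    rw [htrA, htr1] at h
    linarith
  have hsumsq : ∑ v, (μ v)^2 = ((p:ℝ)^2 - p)/2 := (sum_eig_sq_trace hA).trans htrAA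
  -- the minimal polynomial identity
  have hM : (B*B - ((p:ℝ)^2) • 1) * (B*B - (p:ℝ) • 1) = 0 := by
    rw [hBB]
    have e1 : ((p:ℝ)-1) • J + (p:ℝ) • 1 - ((p:ℝ)^2) • (1 : Matrix (ZMod p) (ZMod p) ℝ)
        = ((p:ℝ)-1) • J - ((p:ℝ)^2 - p) • 1 := by module
    have e2 : ((p:ℝ)-1) • J + (p:ℝ) • 1 - (p:ℝ) • (1 : Matrix (ZMod p) (ZMod p) ℝ)
        = ((p:ℝ)-1) • J := by module
    rw [e1, e2, sub_mul, Matrix.smul_mul, Matrix.smul_mul, Matrix.mul_smul, hJJ,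
      Matrix.one_mul]
    module
  -- eigenvalue equation
  have heig : ∀ v, ((2*μ v + 1)^2 - (p:ℝ)^2) * ((2*μ v + 1)^2 - p) = 0 := by
    intro v
    have hu := hA.mulVec_eigenvectorBasis v
    set u : ZMod p → ℝ := ⇑(hA.eigenvectorBasis v) with hudef
    have hune : u ≠ 0 := by
      intro h
      apply Module.Basis.ne_zero hA.eigenvectorBasis.toBasis v
      rw [OrthonormalBasis.coe_toBasis]
      ext i
      exact congrFun h i
    have hBu : B *ᵥ u = (2 * μ v + 1) • u := by
      rw [hBdef, Matrix.add_mulVec, Matrix.add_mulVec, Matrix.one_mulVec, hu]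
      module
    have hBBu : (B*B) *ᵥ u = ((2*μ v + 1)^2) • u := by
      rw [← Matrix.mulVec_mulVec, hBu, Matrix.mulVec_smul, hBu, smul_smul, ← sq]
    have hMu : ((B*B - ((p:ℝ)^2) • 1) * (B*B - (p:ℝ) • 1)) *ᵥ u
        = (((2*μ v + 1)^2 - (p:ℝ)^2) * ((2*μ v + 1)^2 - p)) • u := by
      have hi : (B*B - (p:ℝ) • 1) *ᵥ u = ((2*μ v + 1)^2 - p) • u := by
        rw [Matrix.sub_mulVec, hBBu, Matrix.smul_mulVec, Matrix.one_mulVec, ← sub_smul]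
      have ho : (B*B - ((p:ℝ)^2) • 1) *ᵥ (((2*μ v + 1)^2 - (p:ℝ)) • u)
          = (((2*μ v + 1)^2 - p) * ((2*μ v + 1)^2 - (p:ℝ)^2)) • u := by
        rw [Matrix.mulVec_smul, Matrix.sub_mulVec, hBBu, Matrix.smul_mulVec,
          Matrix.one_mulVec, ← sub_smul, smul_smul]
      rw [← Matrix.mulVec_mulVec, hi, ho, mul_comm]
    have hzero : (((2*μ v + 1)^2 - (p:ℝ)^2) * ((2*μ v + 1)^2 - p)) • u = 0 := by
      rw [← hMu, hM, Matrix.zero_mulVec]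
    exact (smul_eq_zero.mp hzero).resolve_right hune
  set β : ZMod p → ℝ := fun v => 2 * μ v + 1 with hβdef
  have hcases : ∀ v, β v = p ∨ β v = -p ∨ β v = s ∨ β v = -s := by
    intro v
    have h := heig v
    rcases mul_eq_zero.mp h with h1 | h1
    · rcases mul_eq_zero.mp (show (β v - p) * (β v + p) = 0 by
        simp only [hβdef]; linear_combination h1) with h2 | h2
      · exact Or.inl (by linarith [sub_eq_zero.mp h2])
      · exact Or.inr (Or.inl (by linarith [eq_neg_of_add_eq_zero_left h2]))
    · rcases mul_eq_zero.mp (show (β v - s) * (β v + s) = 0 by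
        simp only [hβdef]; linear_combination h1 - hs2) with h2 | h2
      · exact Or.inr (Or.inr (Or.inl (by linarith [sub_eq_zero.mp h2])))
      · exact Or.inr (Or.inr (Or.inr (by linarith [eq_neg_of_add_eq_zero_left h2])))
  have hsumβ : ∑ v, β v = (p:ℝ) := by
    simp only [hβdef]
    rw [Finset.sum_add_distrib, Finset.sum_const, Finset.card_univ, hcard, ← Finset.mul_sum,
      hsum, nsmul_eq_mul, mul_one, mul_zero, zero_add]
  have hsumβ2 : ∑ v, (β v)^2 = 2*(p:ℝ)^2 - p := by
    have h : ∀ v : ZMod p, (β v)^2 = 4*(μ v)^2 + 4*(μ v) + 1 := fun v => by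
      simp only [hβdef]; ring
    rw [Finset.sum_congr rfl (fun v _ => h v), Finset.sum_add_distrib,
      Finset.sum_add_distrib, Finset.sum_const, Finset.card_univ, hcard, ← Finset.mul_sum,
      ← Finset.mul_sum, hsum, hsumsq, nsmul_eq_mul, mul_one]
    ring
  -- reduce to the counting lemma
  have habs : ∀ v, |μ v| = |(β v - 1)/2| := by
    intro v
    simp only [hβdef]
    congr 1
    ring
  rw [Finset.sum_congr rfl (fun v _ => habs v)]
  have hirr : Irrational s := Nat.Prime.irrational_sqrt (Fact.out)
  exact energy_counting p hp11 β s hs2 hs1 hirr hcard hsumβ hsumβ2 hcases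

/-- For a prime `p ≥ 11` with `p ≡ 1 (mod 4)`, the energy of the Paley graph `G_p`
equals `(p-1)(1+√p)/2`; in particular `E(G_p) > p^(3/2)/2`. -/
theorem energy_paleyGraph (p : ℕ) (hp1 : p.Prime) (hp11 : 11 ≤ p) (hp : p % 4 = 1) :
    haveI : Fact p.Prime := ⟨hp1⟩
    (paleyGraph p hp).energy = ((p : ℝ) - 1) * (1 + Real.sqrt p) / 2 ∧
    (paleyGraph p hp).energy > (p : ℝ) ^ ((3 : ℝ) / 2) / 2 := by
  haveI : Fact p.Prime := ⟨hp1⟩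
  have hE : (paleyGraph p hp).energy = ((p : ℝ) - 1) * (1 + Real.sqrt p) / 2 := by
    unfold SimpleGraph.energy SimpleGraph.adjEigenvalues
    exact paley_energy_sum (inst := Classical.decRel _) p hp11 hp _
  refine ⟨hE, ?_⟩
  rw [hE]
  have hpreal : (11:ℝ) ≤ p := by exact_mod_cast hp11
  have hppos : (0:ℝ) < p := by linarith
  set s := Real.sqrt p with hs
  have hs2 : s^2 = p := Real.sq_sqrt hppos.le
  have hs0 : 0 ≤ s := Real.sqrt_nonneg _
  have hrw : (p:ℝ) ^ ((3:ℝ)/2) = p * s := by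
    rw [show (3:ℝ)/2 = 1 + 1/2 by norm_num, Real.rpow_add hppos, Real.rpow_one, hs,
      Real.sqrt_eq_rpow]
  rw [hrw]
  have hslt : s < (p:ℝ) - 1 := by nlinarith [sq_nonneg (s-1)]
  rw [gt_iff_lt, div_lt_div_iff_of_pos_right (by norm_num : (0:ℝ) < 2)]
  nlinarith [hslt, hs0, hppos]
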